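/- Let α ∈ (0,2) and define ℓ(λ) = ((λ+1)^{α/2} − 1)/λ^{α/2} for λ > 0. Then there exist M > 1 and a nonnegative integrable function f on (0,1) such that |log(ℓ(λ²θ²)/ℓ(λ²))| ≤ f(θ) for all θ ∈ (0,1) and λ > M. -/

import Mathlib

open Real MeasureTheory

lemma aux_up {a : ℝ} (ha0 : 0 ≤ a) (ha1 : a ≤ 1) {x : ℝ} (hx : 0 ≤ x) :
    (x + 1) ^ a ≤ x ^ a + 1 := by
  have h := NNReal.rpow_add_le_add_rpow x.toNNReal 1 ha0 ha1
  have h' := NNReal.coe_le_coe.mpr h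
  push_cast [NNReal.coe_rpow] at h'
  rwa [Real.coe_toNNReal x hx, Real.one_rpow] at h'

lemma aux_low1 {a : ℝ} (ha0 : 0 < a) (ha1 : a < 1) {x : ℝ} (hx0 : 0 ≤ x) (hx1 : x ≤ 1) :
    1 + ((2:ℝ) ^ a - 1) * x ≤ (x + 1) ^ a := by
  have hcc := (Real.concaveOn_rpow ha0.le ha1.le).2 (Set.mem_Ici.2 zero_le_one)
    (Set.mem_Ici.2 (by norm_num : (0:ℝ) ≤ 2)) (by linarith : (0:ℝ) ≤ 1 - x) hx0
    (by ring : (1 - x) + x = 1)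
  simp only [smul_eq_mul, Real.one_rpow] at hcc
  have he : (1 - x) * 1 + x * 2 = x + 1 := by ring
  rw [he] at hcc
  calc 1 + ((2:ℝ) ^ a - 1) * x = (1 - x) * 1 + x * (2:ℝ) ^ a := by ring
    _ ≤ (x + 1) ^ a := hcc

theorem stmt_2 (α : ℝ) (hα : α ∈ Set.Ioo (0 : ℝ) 2)
    (ℓ : ℝ → ℝ) (hℓ : ∀ lam > 0, ℓ lam = ((lam + 1) ^ (α / 2) - 1) / lam ^ (α / 2)) :
    ∃ M > (1 : ℝ), ∃ f : ℝ → ℝ,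
      (∀ θ ∈ Set.Ioo (0 : ℝ) 1, 0 ≤ f θ) ∧
      MeasureTheory.IntegrableOn f (Set.Ioo (0 : ℝ) 1) ∧
      ∀ θ ∈ Set.Ioo (0 : ℝ) 1, ∀ lam > M,
        |Real.log (ℓ (lam ^ 2 * θ ^ 2) / ℓ (lam ^ 2))| ≤ f θ := by
  obtain ⟨hα0, hα2⟩ := hα
  set a : ℝ := α / 2 with ha_def
  have ha0 : 0 < a := by positivity
  have ha1 : a < 1 := by rw [ha_def]; linarith
  set t : ℝ := (2:ℝ) ^ a with ht_def
  have htpos : 0 < t := Real.rpow_pos_of_pos two_pos a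
  have ht1 : 1 < t := by
    rw [ht_def, Real.one_lt_rpow_iff_of_pos two_pos]
    exact Or.inl ⟨one_lt_two, ha0⟩
  set c : ℝ := 1 - (2:ℝ) ^ (-a) with hc_def
  have hc_eq : c = 1 - t⁻¹ := by
    rw [hc_def, Real.rpow_neg (by norm_num : (0:ℝ) ≤ 2) a]
  have htinv1 : t⁻¹ < 1 := inv_lt_one_of_one_lt₀ ht1
  have htinv0 : 0 < t⁻¹ := inv_pos.2 htpos
  have hti : t * t⁻¹ = 1 := mul_inv_cancel₀ htpos.ne'
  have hc0 : 0 < c := by rw [hc_eq]; linarith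
  have hc1 : c < 1 := by rw [hc_eq]; linarith
  have hcle : c ≤ t - 1 := by
    rw [hc_eq]
    nlinarith [mul_nonneg (sub_nonneg.2 ht1.le) (sub_nonneg.2 htinv1.le)]
  -- upper bound for ℓ
  have hub : ∀ x : ℝ, 0 < x → ℓ x ≤ 1 := by
    intro x hx
    rw [hℓ x hx, div_le_one (Real.rpow_pos_of_pos hx a)]
    linarith [aux_up ha0.le ha1.le hx.le]
  -- lower bound for ℓ, large x
  have hlbc : ∀ x : ℝ, 1 ≤ x → c ≤ ℓ x := by
    intro x hx
    have hx0 : (0:ℝ) < x := lt_of_lt_of_le one_pos hx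
    rw [hℓ x hx0, le_div_iff₀ (Real.rpow_pos_of_pos hx0 a)]
    have h1 : (1:ℝ) ≤ ((x+1)/2) ^ a := by
      calc (1:ℝ) = 1 ^ a := (Real.one_rpow a).symm
        _ ≤ ((x+1)/2) ^ a := Real.rpow_le_rpow zero_le_one (by linarith) ha0.le
    have h2 : ((x+1)/2 : ℝ) ^ a = (x+1) ^ a / (2:ℝ) ^ a :=
      Real.div_rpow (by linarith) (by norm_num) a
    rw [← ht_def] at h2
    have htu : t ≤ (x+1) ^ a := by
      rw [h2, le_div_iff₀ htpos] at h1; linarith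
    have hvu : x ^ a ≤ (x+1) ^ a := Real.rpow_le_rpow hx0.le (by linarith) ha0.le
    have hv0 : 0 ≤ x ^ a := (Real.rpow_pos_of_pos hx0 a).le
    rw [hc_eq]
    nlinarith [mul_nonneg (sub_nonneg.2 hvu) (sub_nonneg.2 htinv1.le),
      mul_nonneg htinv0.le (sub_nonneg.2 htu)]
  -- lower bound for ℓ, small x
  have hlbs : ∀ x : ℝ, 0 < x → x ≤ 1 → c * x ^ ((1:ℝ) - a) ≤ ℓ x := by
    intro x hx0 hx1
    rw [hℓ x hx0, le_div_iff₀ (Real.rpow_pos_of_pos hx0 a)]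
    have hxx : x ^ ((1:ℝ) - a) * x ^ a = x := by
      rw [← Real.rpow_add hx0]; norm_num
    have hlin := aux_low1 ha0 ha1 hx0.le hx1
    have hcx : c * x ≤ (t - 1) * x := mul_le_mul_of_nonneg_right hcle hx0.le
    calc c * x ^ ((1:ℝ) - a) * x ^ a = c * x := by rw [mul_assoc, hxx]
      _ ≤ (t - 1) * x := hcx
      _ ≤ (x + 1) ^ a - 1 := by rw [ht_def]; linarith
  refine ⟨2, by norm_num, fun θ => (-Real.log c) + (2 - α) * (2 * θ ^ (-(1/2) : ℝ)), ?_, ?_, ?_⟩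
  · intro θ ⟨hθ0, hθ1⟩
    have hlogc : Real.log c ≤ 0 := Real.log_nonpos hc0.le hc1.le
    have : (0:ℝ) ≤ θ ^ (-(1/2) : ℝ) := Real.rpow_nonneg hθ0.le _
    nlinarith
  · have hint : IntegrableOn (fun θ : ℝ => θ ^ (-(1/2) : ℝ)) (Set.Ioo 0 1) := by
      have h := intervalIntegral.intervalIntegrable_rpow' (a := 0) (b := 1)
        (by norm_num : (-1:ℝ) < -(1/2))
      rwa [intervalIntegrable_iff_integrableOn_Ioo_of_le zero_le_one] at h
    exact (integrableOn_const measure_Ioo_lt_top.ne).add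
      (((hint.const_mul 2).const_mul (2 - α)))
  · intro θ ⟨hθ0, hθ1⟩ lam hlam
    have hlam1 : (1:ℝ) < lam := by linarith
    set x1 : ℝ := lam ^ 2 * θ ^ 2 with hx1_def
    set x2 : ℝ := lam ^ 2 with hx2_def
    have hx2 : 1 ≤ x2 := by nlinarith
    have hx1pos : 0 < x1 := by positivity
    have hθsq : θ ^ 2 ≤ x1 := by nlinarith [sq_nonneg θ]
    have hθsqpos : (0:ℝ) < θ ^ 2 := by positivity
    have hθsq1 : θ ^ 2 ≤ 1 := by nlinarith
    set w : ℝ := (θ ^ 2) ^ ((1:ℝ) - a) with hw_def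
    have hw0 : 0 < w := Real.rpow_pos_of_pos hθsqpos _
    have hw1 : w ≤ 1 := Real.rpow_le_one hθsqpos.le hθsq1 (by linarith)
    have hℓ1_lb : c * w ≤ ℓ x1 := by
      rcases le_or_gt x1 1 with h | h
      · calc c * w ≤ c * x1 ^ ((1:ℝ) - a) :=
              mul_le_mul_of_nonneg_left
                (Real.rpow_le_rpow hθsqpos.le hθsq (by linarith)) hc0.le
          _ ≤ ℓ x1 := hlbs x1 hx1pos h
      · calc c * w ≤ c := mul_le_of_le_one_right hc0.le hw1
          _ ≤ ℓ x1 := hlbc x1 h.le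
    have hℓ1_ub : ℓ x1 ≤ 1 := hub x1 hx1pos
    have hℓ2_lb : c ≤ ℓ x2 := hlbc x2 hx2
    have hℓ2_ub : ℓ x2 ≤ 1 := hub x2 (by positivity)
    have hℓ1pos : 0 < ℓ x1 := lt_of_lt_of_le (by positivity) hℓ1_lb
    have hℓ2pos : 0 < ℓ x2 := lt_of_lt_of_le hc0 hℓ2_lb
    have hlog : Real.log (ℓ x1 / ℓ x2) = Real.log (ℓ x1) - Real.log (ℓ x2) :=
      Real.log_div hℓ1pos.ne' hℓ2pos.ne'
    have h1u : Real.log (ℓ x1) ≤ 0 := Real.log_nonpos hℓ1pos.le hℓ1_ub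
    have h2u : Real.log (ℓ x2) ≤ 0 := Real.log_nonpos hℓ2pos.le hℓ2_ub
    have h2l : Real.log c ≤ Real.log (ℓ x2) := Real.log_le_log hc0 hℓ2_lb
    have h1l : Real.log c + (1 - a) * (2 * Real.log θ) ≤ Real.log (ℓ x1) := by
      have h := Real.log_le_log (by positivity) hℓ1_lb
      rw [Real.log_mul hc0.ne' hw0.ne', hw_def, Real.log_rpow hθsqpos,
        Real.log_pow] at h
      push_cast at h
      linarith
    have hR0 : (0:ℝ) ≤ θ ^ (-(1/2) : ℝ) := Real.rpow_nonneg hθ0.le _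
    have hneglog : -Real.log θ ≤ 2 * θ ^ (-(1/2) : ℝ) := by
      have h := Real.log_le_sub_one_of_pos (Real.rpow_pos_of_pos hθ0 (-(1/2)))
      rw [Real.log_rpow hθ0] at h
      linarith
    have hmul : (2 - α) * (-Real.log θ) ≤ (2 - α) * (2 * θ ^ (-(1/2) : ℝ)) :=
      mul_le_mul_of_nonneg_left hneglog (by linarith)
    have haα : (1 - a) * (2 * Real.log θ) = (2 - α) * Real.log θ := by
      rw [ha_def]; ring
    rw [haα] at h1l
    rw [hlog]
    rw [abs_le]
    have hprod : 0 ≤ (2 - α) * (2 * θ ^ (-(1/2) : ℝ)) :=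
      mul_nonneg (by linarith) (by positivity)
    constructor
    · linarith [h1l, h2u, hmul]
    · linarith [h1u, h2l, hprod]
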